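/- For every integer n ≥ 2 and every κ ∈ ℝ, the model isoperimetric profile I_κ, extended by I_κ(0) = 0, is concave on the closure of the range of V_κ. In particular, I_κ(δ·v) ≥ δ·I_κ(v) for every v in the range of V_κ and every δ ∈ [0,1]. -/

import Mathlib

open Real MeasureTheory Filter Asymptotics

/-- Inverse hyperbolic tangent. -/
noncomputable def artanh (y : ℝ) : ℝ := Real.log ((1 + y) / (1 - y)) / 2

/-- The generalized sine function `sin_κ`. -/
noncomputable def sinK (κ t : ℝ) : ℝ :=
  if 0 < κ then Real.sin (Real.sqrt κ * t) / Real.sqrt κ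
  else if κ < 0 then Real.sinh (Real.sqrt (-κ) * t) / Real.sqrt (-κ)
  else t

/-- The generalized cosine function `cos_κ = sin_κ'`. -/
noncomputable def cosK (κ t : ℝ) : ℝ :=
  if 0 < κ then Real.cos (Real.sqrt κ * t)
  else if κ < 0 then Real.cosh (Real.sqrt (-κ) * t)
  else 1

/-- The generalized tangent function `tan_κ`. -/
noncomputable def tanK (κ t : ℝ) : ℝ := sinK κ t / cosK κ t

/-- The inverse function `arctan_κ` of `tan_κ`. -/
noncomputable def arctanK (κ x : ℝ) : ℝ :=
  if 0 < κ then Real.arctan (Real.sqrt κ * x) / Real.sqrt κ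
  else if κ < 0 then _root_.artanh (Real.sqrt (-κ) * x) / Real.sqrt (-κ)
  else x

/-- `ω_{n-1}`, the (n-1)-volume of the unit sphere of ℝⁿ, i.e. `n` times the
volume of the unit ball. -/
noncomputable def omegaS (n : ℕ) : ℝ :=
  n * (volume (Metric.ball (0 : EuclideanSpace ℝ (Fin n)) 1)).toReal

/-- `A_κ(t)`: the volume of a geodesic sphere of radius `t` in the model space. -/
noncomputable def AK (n : ℕ) (κ t : ℝ) : ℝ := omegaS n * sinK κ t ^ (n - 1)

/-- `V_κ(t)`: the volume of a geodesic ball of radius `t` in the model space. -/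
noncomputable def VK (n : ℕ) (κ t : ℝ) : ℝ := omegaS n * ∫ s in (0:ℝ)..t, sinK κ s ^ (n - 1)

/-- The natural domain of `V_κ`: `[0, π/√κ)` when `κ > 0` and `[0, ∞)` otherwise. -/
noncomputable def domK (κ : ℝ) : Set ℝ :=
  if 0 < κ then Set.Ico 0 (Real.pi / Real.sqrt κ) else Set.Ici 0

/-- The range of `V_κ` (on its natural domain). -/
noncomputable def rangeVK (n : ℕ) (κ : ℝ) : Set ℝ := VK n κ '' domK κ

/-- The inverse of `V_κ` on its natural domain. -/
noncomputable def VKinv (n : ℕ) (κ v : ℝ) : ℝ := sInf {t : ℝ | t ∈ domK κ ∧ VK n κ t = v}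

/-- The isoperimetric profile `I_κ = A_κ ∘ V_κ⁻¹` of the model space. -/
noncomputable def IK (n : ℕ) (κ v : ℝ) : ℝ := AK n κ (VKinv n κ v)

section Helpers

variable {n : ℕ} {κ : ℝ}

lemma omegaS_pos (hn : 1 ≤ n) : 0 < omegaS n := by
  unfold omegaS
  have h1 : 0 < volume (Metric.ball (0 : EuclideanSpace ℝ (Fin n)) 1) :=
    Metric.measure_ball_pos _ _ one_pos
  have h2 : volume (Metric.ball (0 : EuclideanSpace ℝ (Fin n)) 1) ≠ ⊤ :=
    measure_ball_lt_top.ne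
  have hn' : (0:ℝ) < n := by exact_mod_cast hn
  exact mul_pos hn' (ENNReal.toReal_pos h1.ne' h2)

lemma sinK_zero : sinK κ 0 = 0 := by
  unfold sinK; split_ifs <;> simp

lemma sinK_pos {t : ℝ} (h0 : 0 < t) (hT : 0 < κ → t < Real.pi / Real.sqrt κ) :
    0 < sinK κ t := by
  unfold sinK
  split_ifs with h1 h2
  · have hs : 0 < Real.sqrt κ := Real.sqrt_pos.2 h1
    apply div_pos _ hs
    apply Real.sin_pos_of_pos_of_lt_pi (by positivity)
    calc Real.sqrt κ * t < Real.sqrt κ * (Real.pi / Real.sqrt κ) :=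
          mul_lt_mul_of_pos_left (hT h1) hs
      _ = Real.pi := by field_simp
  · have hs : 0 < Real.sqrt (-κ) := Real.sqrt_pos.2 (by linarith)
    exact div_pos (Real.sinh_pos_iff.2 (by positivity)) hs
  · exact h0

lemma self_le_sinK {t : ℝ} (hκ : ¬ 0 < κ) (ht : 0 ≤ t) : t ≤ sinK κ t := by
  unfold sinK
  rw [if_neg hκ]
  split_ifs with h2
  · have hs : 0 < Real.sqrt (-κ) := Real.sqrt_pos.2 (by linarith)
    rw [le_div_iff₀ hs]
    have h3 : Real.sqrt (-κ) * t ≤ Real.sinh (Real.sqrt (-κ) * t) :=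
      Real.self_le_sinh_iff.2 (by positivity)
    linarith
  · exact le_refl t

lemma continuous_sinK : Continuous (sinK κ) := by
  unfold sinK
  rcases lt_trichotomy 0 κ with h | h | h
  · simp only [if_pos h]; fun_prop
  · subst h; norm_num; exact continuous_id
  · simp only [if_neg h.not_gt, if_pos h]; fun_prop

lemma hasDerivAt_sinK (t : ℝ) : HasDerivAt (sinK κ) (cosK κ t) t := by
  rcases lt_trichotomy 0 κ with h | h | h
  · have hs : Real.sqrt κ ≠ 0 := (Real.sqrt_pos.2 h).ne'
    have hfun : sinK κ = fun x => Real.sin (Real.sqrt κ * x) / Real.sqrt κ := by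
      funext x; simp [sinK, if_pos h]
    have hcos : cosK κ t = Real.cos (Real.sqrt κ * t) := by simp [cosK, if_pos h]
    rw [hfun, hcos]
    have h1 : HasDerivAt (fun t : ℝ => Real.sqrt κ * t) (Real.sqrt κ) t := by
      simpa using (hasDerivAt_id t).const_mul (Real.sqrt κ)
    have h2 := (Real.hasDerivAt_sin (Real.sqrt κ * t)).comp t h1
    have h3 := h2.div_const (Real.sqrt κ)
    rw [mul_div_assoc, div_self hs, mul_one] at h3
    exact h3
  · subst h
    have hfun : sinK 0 = fun x : ℝ => x := by funext x; simp [sinK]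
    have hcos : cosK 0 t = 1 := by simp [cosK]
    rw [hfun, hcos]
    exact hasDerivAt_id t
  · have hs : Real.sqrt (-κ) ≠ 0 := (Real.sqrt_pos.2 (by linarith)).ne'
    have hfun : sinK κ = fun x => Real.sinh (Real.sqrt (-κ) * x) / Real.sqrt (-κ) := by
      funext x; simp [sinK, if_neg h.not_gt, if_pos h]
    have hcos : cosK κ t = Real.cosh (Real.sqrt (-κ) * t) := by
      simp [cosK, if_neg h.not_gt, if_pos h]
    rw [hfun, hcos]
    have h1 : HasDerivAt (fun t : ℝ => Real.sqrt (-κ) * t) (Real.sqrt (-κ)) t := by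
      simpa using (hasDerivAt_id t).const_mul (Real.sqrt (-κ))
    have h2 := (Real.hasDerivAt_sinh (Real.sqrt (-κ) * t)).comp t h1
    have h3 := h2.div_const (Real.sqrt (-κ))
    rw [mul_div_assoc, div_self hs, mul_one] at h3
    exact h3

lemma hasDerivAt_AK (t : ℝ) :
    HasDerivAt (AK n κ)
      (omegaS n * (((n - 1 : ℕ) : ℝ) * sinK κ t ^ (n - 1 - 1) * cosK κ t)) t := by
  have h := ((hasDerivAt_sinK (κ := κ) t).pow (n := n - 1)).const_mul (omegaS n)
  exact h

lemma hasDerivAt_VK (t : ℝ) : HasDerivAt (VK n κ) (AK n κ t) t := by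
  have hc : Continuous fun s => sinK κ s ^ (n - 1) := (continuous_sinK).pow _
  have h := ((hc.integral_hasStrictDerivAt 0 t).hasDerivAt).const_mul (omegaS n)
  exact h

lemma continuous_VK : Continuous (VK n κ) :=
  continuous_iff_continuousAt.2 fun t => (hasDerivAt_VK t).continuousAt

lemma continuous_AK : Continuous (AK n κ) :=
  continuous_const.mul ((continuous_sinK).pow _)

lemma key_identity (c d : ℝ) :
    cosK κ c * sinK κ d - cosK κ d * sinK κ c = sinK κ (d - c) := by
  rcases lt_trichotomy 0 κ with h | h | h
  · have hs : Real.sqrt κ ≠ 0 := (Real.sqrt_pos.2 h).ne'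
    simp only [sinK, cosK, if_pos h, mul_sub]
    rw [Real.sin_sub]
    field_simp
  · subst h; simp [sinK, cosK]
  · have hs : Real.sqrt (-κ) ≠ 0 := (Real.sqrt_pos.2 (by linarith)).ne'
    simp only [sinK, cosK, if_neg h.not_gt, if_pos h, mul_sub]
    rw [Real.sinh_sub]
    field_simp

lemma VK_zero : VK n κ 0 = 0 := by simp [VK]

lemma VK_lt (hn : 1 ≤ n) {a b : ℝ} (ha : 0 ≤ a) (hab : a < b)
    (hb : 0 < κ → b ≤ Real.pi / Real.sqrt κ) : VK n κ a < VK n κ b := by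
  have hω : 0 < omegaS n := omegaS_pos hn
  have hc : Continuous fun s => sinK κ s ^ (n - 1) := (continuous_sinK).pow _
  have hint : ∀ x y : ℝ, IntervalIntegrable (fun s => sinK κ s ^ (n - 1)) volume x y :=
    fun x y => hc.intervalIntegrable x y
  have key : 0 < ∫ s in a..b, sinK κ s ^ (n - 1) := by
    apply intervalIntegral.intervalIntegral_pos_of_pos_on (hint a b) _ hab
    intro x hx
    exact pow_pos (sinK_pos (ha.trans_lt hx.1) (fun hκ => hx.2.trans_le (hb hκ))) _
  have hadd : (∫ s in (0:ℝ)..a, sinK κ s ^ (n - 1)) + ∫ s in a..b, sinK κ s ^ (n - 1)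
      = ∫ s in (0:ℝ)..b, sinK κ s ^ (n - 1) :=
    intervalIntegral.integral_add_adjacent_intervals (hint 0 a) (hint a b)
  unfold VK
  nlinarith [key, hω, hadd]

lemma slope_ineq (hn : 2 ≤ n) {t₁ t₂ t₃ : ℝ} (h1 : 0 ≤ t₁) (h12 : t₁ < t₂)
    (h23 : t₂ < t₃) (h3 : 0 < κ → t₃ ≤ Real.pi / Real.sqrt κ) :
    (AK n κ t₃ - AK n κ t₂) * (VK n κ t₂ - VK n κ t₁)
      ≤ (AK n κ t₂ - AK n κ t₁) * (VK n κ t₃ - VK n κ t₂) := by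
  have hn1 : 1 ≤ n := by omega
  have hω : 0 < omegaS n := omegaS_pos hn1
  set A' : ℝ → ℝ :=
    fun t => omegaS n * (((n - 1 : ℕ) : ℝ) * sinK κ t ^ (n - 1 - 1) * cosK κ t) with hA'
  obtain ⟨c, hc, hceq⟩ := exists_ratio_hasDerivAt_eq_ratio_slope (AK n κ) A' h12
    (continuous_AK.continuousOn) (fun x _ => hasDerivAt_AK x)
    (VK n κ) (AK n κ) (continuous_VK.continuousOn) (fun x _ => hasDerivAt_VK x)
  obtain ⟨d, hd, hdeq⟩ := exists_ratio_hasDerivAt_eq_ratio_slope (AK n κ) A' h23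
    (continuous_AK.continuousOn) (fun x _ => hasDerivAt_AK x)
    (VK n κ) (AK n κ) (continuous_VK.continuousOn) (fun x _ => hasDerivAt_VK x)
  have hcpos : 0 < c := h1.trans_lt hc.1
  have hcT : 0 < κ → c < Real.pi / Real.sqrt κ := fun hκ => (hc.2.trans h23).trans_le (h3 hκ)
  have hdpos : 0 < d := hcpos.trans (hc.2.trans hd.1)
  have hdT : 0 < κ → d < Real.pi / Real.sqrt κ := fun hκ => hd.2.trans_le (h3 hκ)
  have hsc : 0 < sinK κ c := sinK_pos hcpos hcT
  have hsd : 0 < sinK κ d := sinK_pos hdpos hdT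
  have hcd : c < d := hc.2.trans hd.1
  have hkey : 0 ≤ cosK κ c * sinK κ d - cosK κ d * sinK κ c := by
    rw [key_identity]
    exact (sinK_pos (by linarith) (fun hκ => by have := hdT hκ; linarith)).le
  have hP : 0 < VK n κ t₂ - VK n κ t₁ :=
    sub_pos.2 (VK_lt hn1 h1 h12 (fun hκ => (h23.le.trans (h3 hκ))))
  have hQ : 0 < VK n κ t₃ - VK n κ t₂ :=
    sub_pos.2 (VK_lt hn1 (by linarith) h23 h3)
  have hAc : 0 < AK n κ c := mul_pos hω (pow_pos hsc _)
  have hAd : 0 < AK n κ d := mul_pos hω (pow_pos hsd _)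
  have hm : n - 1 = (n - 2) + 1 := by omega
  have hm2 : n - 1 - 1 = n - 2 := by omega
  have hmain : A' d * AK n κ c ≤ A' c * AK n κ d := by
    rw [← sub_nonneg]
    have heq : A' c * AK n κ d - A' d * AK n κ c
        = omegaS n * omegaS n * ((n - 1 : ℕ) : ℝ) * sinK κ c ^ (n - 2) * sinK κ d ^ (n - 2)
          * (cosK κ c * sinK κ d - cosK κ d * sinK κ c) := by
      rw [hA']
      simp only [AK]
      rw [hm2, hm]
      simp only [pow_succ]
      ring
    rw [heq]
    exact mul_nonneg (mul_nonneg (mul_nonneg (mul_nonneg (mul_pos hω hω).le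
      (Nat.cast_nonneg _)) (pow_pos hsc _).le) (pow_pos hsd _).le) hkey
  have hfin : (AK n κ t₃ - AK n κ t₂) * (VK n κ t₂ - VK n κ t₁) * (AK n κ c * AK n κ d)
      ≤ (AK n κ t₂ - AK n κ t₁) * (VK n κ t₃ - VK n κ t₂) * (AK n κ c * AK n κ d) := by
    have e1 : (AK n κ t₃ - AK n κ t₂) * (VK n κ t₂ - VK n κ t₁) * (AK n κ c * AK n κ d)
        = ((VK n κ t₂ - VK n κ t₁) * (VK n κ t₃ - VK n κ t₂)) * (A' d * AK n κ c) := by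
      linear_combination (-(VK n κ t₂ - VK n κ t₁) * AK n κ c) * hdeq
    have e2 : (AK n κ t₂ - AK n κ t₁) * (VK n κ t₃ - VK n κ t₂) * (AK n κ c * AK n κ d)
        = ((VK n κ t₂ - VK n κ t₁) * (VK n κ t₃ - VK n κ t₂)) * (A' c * AK n κ d) := by
      linear_combination (-(VK n κ t₃ - VK n κ t₂) * AK n κ d) * hceq
    rw [e1, e2]
    exact mul_le_mul_of_nonneg_left hmain (mul_pos hP hQ).le
  exact le_of_mul_le_mul_right hfin (mul_pos hAc hAd)

lemma mem_domK {t : ℝ} (ht : t ∈ domK κ) : 0 ≤ t ∧ (0 < κ → t < Real.pi / Real.sqrt κ) := by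
  unfold domK at ht
  split_ifs at ht with h
  · exact ⟨ht.1, fun _ => ht.2⟩
  · exact ⟨ht, fun hκ => absurd hκ h⟩

lemma zero_mem_domK : (0:ℝ) ∈ domK κ := by
  unfold domK
  split_ifs with h
  · exact ⟨le_refl 0, div_pos Real.pi_pos (Real.sqrt_pos.2 h)⟩
  · exact Set.mem_Ici.2 (le_refl 0)

lemma VKinv_eq (hn : 1 ≤ n) {t : ℝ} (ht : t ∈ domK κ) : VKinv n κ (VK n κ t) = t := by
  have key : ∀ s ∈ domK κ, VK n κ s = VK n κ t → s = t := by
    intro s hs hV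
    by_contra hne
    rcases lt_or_gt_of_ne hne with h | h
    · exact absurd hV (VK_lt hn (mem_domK hs).1 h (fun hκ => ((mem_domK ht).2 hκ).le)).ne
    · exact absurd hV.symm (VK_lt hn (mem_domK ht).1 h (fun hκ => ((mem_domK hs).2 hκ).le)).ne
  have hset : {s : ℝ | s ∈ domK κ ∧ VK n κ s = VK n κ t} = {t} := by
    ext s
    simp only [Set.mem_setOf_eq, Set.mem_singleton_iff]
    exact ⟨fun h => key s h.1 h.2, fun h => by subst h; exact ⟨ht, rfl⟩⟩
  unfold VKinv
  rw [hset, csInf_singleton]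

lemma IK_VK (hn : 1 ≤ n) {t : ℝ} (ht : t ∈ domK κ) : IK n κ (VK n κ t) = AK n κ t := by
  unfold IK; rw [VKinv_eq hn ht]

lemma AK_zero (hn : 2 ≤ n) : AK n κ 0 = 0 := by
  have h : n - 1 ≠ 0 := Nat.sub_ne_zero_of_lt hn
  rw [AK, sinK_zero, zero_pow h, mul_zero]

lemma IK_zero (hn : 2 ≤ n) : IK n κ 0 = 0 := by
  have h := IK_VK (κ := κ) (by omega : 1 ≤ n) zero_mem_domK
  rw [VK_zero] at h
  rw [h, AK_zero hn]

lemma rangeVK_char_nonpos (hn : 1 ≤ n) (hκ : ¬ 0 < κ) : rangeVK n κ = Set.Ici 0 := by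
  have hdom : domK κ = Set.Ici 0 := if_neg hκ
  apply Set.Subset.antisymm
  · rintro v ⟨t, ht, rfl⟩
    rw [hdom] at ht
    rcases eq_or_lt_of_le (Set.mem_Ici.1 ht) with h | h
    · simp [← h, VK_zero]
    · have h2 := VK_lt (κ := κ) hn (le_refl 0) h (fun hk => absurd hk hκ)
      rw [VK_zero] at h2
      exact h2.le
  · intro v hv
    have hv' : (0:ℝ) ≤ v := hv
    have hω := omegaS_pos hn
    have hn0 : (0:ℝ) < n := by exact_mod_cast hn
    set b := max 1 (n * v / omegaS n) with hb
    have hb1 : (1:ℝ) ≤ b := le_max_left _ _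
    have hb0 : (0:ℝ) ≤ b := by linarith
    have hbv : n * v / omegaS n ≤ b := le_max_right _ _
    have hbb : b ≤ b ^ n := le_self_pow₀ hb1 (Nat.one_le_iff_ne_zero.1 hn)
    have hVb : v ≤ VK n κ b := by
      have hmono : ∫ s in (0:ℝ)..b, s ^ (n-1) ≤ ∫ s in (0:ℝ)..b, sinK κ s ^ (n-1) := by
        apply intervalIntegral.integral_mono_on hb0
          (intervalIntegral.intervalIntegrable_pow _)
          (((continuous_sinK).pow _).intervalIntegrable _ _)
        intro s hs
        exact pow_le_pow_left₀ hs.1 (self_le_sinK hκ hs.1) _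
      rw [integral_pow] at hmono
      have hexp : n - 1 + 1 = n := by omega
      rw [hexp] at hmono
      rw [zero_pow (Nat.one_le_iff_ne_zero.1 hn), sub_zero] at hmono
      have hd : ((n - 1 : ℕ) : ℝ) + 1 = (n : ℝ) := by
        have h' : ((n - 1 : ℕ) : ℝ) = (n : ℝ) - 1 := by
          rw [Nat.cast_sub hn]; norm_num
        rw [h']; ring
      rw [hd] at hmono
      have h1 : n * v ≤ omegaS n * b := by
        rw [div_le_iff₀ hω] at hbv; linarith
      have h2 : n * v ≤ omegaS n * b ^ n := by nlinarith
      have h4 : omegaS n * (b ^ n / n) ≤ omegaS n * ∫ s in (0:ℝ)..b, sinK κ s ^ (n-1) :=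
        mul_le_mul_of_nonneg_left hmono hω.le
      have h5 : v ≤ omegaS n * (b ^ n / n) := by
        rw [← mul_div_assoc, le_div_iff₀ hn0]
        linarith [h2]
      unfold VK
      linarith
    have hmem : v ∈ Set.Icc (VK n κ 0) (VK n κ b) := ⟨by rw [VK_zero]; exact hv', hVb⟩
    obtain ⟨t, htmem, htv⟩ :=
      intermediate_value_Icc hb0 (continuous_VK.continuousOn) hmem
    exact ⟨t, by rw [hdom]; exact htmem.1, htv⟩

lemma rangeVK_char_pos (hn : 1 ≤ n) (hκ : 0 < κ) :
    rangeVK n κ = Set.Ico 0 (VK n κ (Real.pi / Real.sqrt κ)) := by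
  set T := Real.pi / Real.sqrt κ with hT
  have hT0 : 0 < T := div_pos Real.pi_pos (Real.sqrt_pos.2 hκ)
  have hdom : domK κ = Set.Ico 0 T := if_pos hκ
  apply Set.Subset.antisymm
  · rintro v ⟨t, ht, rfl⟩
    rw [hdom] at ht
    constructor
    · rcases eq_or_lt_of_le ht.1 with h | h
      · simp [← h, VK_zero]
      · have h2 := VK_lt (κ := κ) hn (le_refl 0) h (fun _ => ht.2.le)
        rw [VK_zero] at h2
        exact h2.le
    · exact VK_lt hn ht.1 ht.2 (fun _ => le_refl T)
  · intro v hv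
    have hv' : v ∈ Set.Ico (VK n κ 0) (VK n κ T) := by rw [VK_zero]; exact hv
    obtain ⟨t, htmem, htv⟩ :=
      intermediate_value_Ico hT0.le (continuous_VK.continuousOn) hv'
    exact ⟨t, by rw [hdom]; exact htmem, htv⟩

lemma IK_top (hn2 : 2 ≤ n) (hκ : 0 < κ) :
    IK n κ (VK n κ (Real.pi / Real.sqrt κ)) = AK n κ (Real.pi / Real.sqrt κ) := by
  have hn : 1 ≤ n := by omega
  set T := Real.pi / Real.sqrt κ with hT
  have hdom : domK κ = Set.Ico 0 T := if_pos hκ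
  have hempty : {s : ℝ | s ∈ domK κ ∧ VK n κ s = VK n κ T} = ∅ := by
    ext s
    simp only [Set.mem_setOf_eq, Set.mem_empty_iff_false, iff_false, not_and]
    intro hs
    rw [hdom] at hs
    exact (VK_lt hn hs.1 hs.2 (fun _ => le_refl T)).ne
  unfold IK VKinv
  rw [hempty, Real.sInf_empty]
  have hs : Real.sqrt κ ≠ 0 := (Real.sqrt_pos.2 hκ).ne'
  have h2 : sinK κ T = 0 := by
    simp only [sinK, if_pos hκ, hT]
    rw [show Real.sqrt κ * (Real.pi / Real.sqrt κ) = Real.pi by field_simp]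
    simp [Real.sin_pi]
  have hne : n - 1 ≠ 0 := Nat.sub_ne_zero_of_lt hn2
  rw [AK_zero hn2, AK, h2, zero_pow hne, mul_zero]

end Helpers

/-- The model isoperimetric profile `I_κ` (which satisfies `I_κ(0) = 0`) is concave
on the closure of the range of `V_κ`; in particular `I_κ(δ·v) ≥ δ·I_κ(v)` for every
`v` in the range of `V_κ` and every `δ ∈ [0,1]`. -/
theorem isoperimetric_profile_concave (n : ℕ) (hn : 2 ≤ n) (κ : ℝ) :
    IK n κ 0 = 0 ∧
    ConcaveOn ℝ (closure (rangeVK n κ)) (IK n κ) ∧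
    ∀ v ∈ rangeVK n κ, ∀ δ ∈ Set.Icc (0 : ℝ) 1, δ * IK n κ v ≤ IK n κ (δ * v) := by
  have hn1 : 1 ≤ n := by omega
  obtain ⟨S, hS_closure, hconv, hmem⟩ :
      ∃ S : Set ℝ, closure (rangeVK n κ) = S ∧ Convex ℝ S ∧
        ∀ v ∈ S, ∃ t, (0 ≤ t ∧ (0 < κ → t ≤ Real.pi / Real.sqrt κ)) ∧
          VK n κ t = v ∧ IK n κ v = AK n κ t := by
    by_cases hκ : 0 < κ
    · set T := Real.pi / Real.sqrt κ with hT
      have hT0 : 0 < T := div_pos Real.pi_pos (Real.sqrt_pos.2 hκ)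
      have hL0 : 0 < VK n κ T := by
        have h := VK_lt (κ := κ) hn1 (le_refl 0) hT0 (fun _ => le_refl T)
        rwa [VK_zero] at h
      refine ⟨Set.Icc 0 (VK n κ T), ?_, convex_Icc _ _, ?_⟩
      · rw [rangeVK_char_pos hn1 hκ, closure_Ico hL0.ne]
      · intro v hv
        rcases eq_or_lt_of_le hv.2 with h | h
        · exact ⟨T, ⟨hT0.le, fun _ => le_refl T⟩, h.symm, by rw [h]; exact IK_top hn hκ⟩
        · have hv' : v ∈ rangeVK n κ := by
            rw [rangeVK_char_pos hn1 hκ]; exact ⟨hv.1, h⟩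
          obtain ⟨t, ht, htv⟩ := hv'
          have hb := mem_domK ht
          exact ⟨t, ⟨hb.1, fun hk => (hb.2 hk).le⟩, htv, by rw [← htv]; exact IK_VK hn1 ht⟩
    · refine ⟨Set.Ici 0, ?_, convex_Ici _, ?_⟩
      · rw [rangeVK_char_nonpos hn1 hκ, closure_Ici]
      · intro v hv
        have hv' : v ∈ rangeVK n κ := by rw [rangeVK_char_nonpos hn1 hκ]; exact hv
        obtain ⟨t, ht, htv⟩ := hv'
        have hb := mem_domK ht
        exact ⟨t, ⟨hb.1, fun hk => (hb.2 hk).le⟩, htv, by rw [← htv]; exact IK_VK hn1 ht⟩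
  have hconc : ConcaveOn ℝ S (IK n κ) := by
    apply concaveOn_of_slope_anti_adjacent hconv
    intro x y z hx hz hxy hyz
    have hy : y ∈ S := hconv.ordConnected.out hx hz ⟨hxy.le, hyz.le⟩
    obtain ⟨t₁, hb₁, hV₁, hI₁⟩ := hmem x hx
    obtain ⟨t₂, hb₂, hV₂, hI₂⟩ := hmem y hy
    obtain ⟨t₃, hb₃, hV₃, hI₃⟩ := hmem z hz
    have hrev : ∀ a b : ℝ, (0 ≤ a ∧ (0 < κ → a ≤ Real.pi / Real.sqrt κ)) →
        (0 ≤ b ∧ (0 < κ → b ≤ Real.pi / Real.sqrt κ)) → VK n κ a < VK n κ b → a < b := by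
      intro a b hba hbb hV
      by_contra hle
      push_neg at hle
      rcases eq_or_lt_of_le hle with h | h
      · rw [h] at hV; exact lt_irrefl _ hV
      · exact absurd (VK_lt hn1 hbb.1 h hba.2) (not_lt.2 hV.le)
    have h12 : t₁ < t₂ := hrev _ _ hb₁ hb₂ (by rw [hV₁, hV₂]; exact hxy)
    have h23 : t₂ < t₃ := hrev _ _ hb₂ hb₃ (by rw [hV₂, hV₃]; exact hyz)
    rw [hI₁, hI₂, hI₃, div_le_div_iff₀ (by linarith) (by linarith)]
    have hs := slope_ineq hn hb₁.1 h12 h23 hb₃.2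
    rw [hV₁, hV₂, hV₃] at hs
    linarith [hs]
  have hIK0 : IK n κ 0 = 0 := IK_zero hn
  refine ⟨hIK0, by rw [hS_closure]; exact hconc, ?_⟩
  intro v hv δ hδ
  have hv' : v ∈ S := by rw [← hS_closure]; exact subset_closure hv
  have h0' : (0:ℝ) ∈ S := by
    rw [← hS_closure]
    exact subset_closure ⟨0, zero_mem_domK, VK_zero⟩
  have hc := hconc.2 hv' h0' hδ.1 (by linarith [hδ.2] : (0:ℝ) ≤ 1 - δ) (by ring)
  simp only [smul_eq_mul, mul_zero, add_zero, hIK0] at hc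
  linarith [hc]
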